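/- Let p be a prime and let K̄ be a non-trivial subgroup of the image D̄ of the diagonal torus in PSL(p,ℂ) which is stable under conjugation by M̄_c. If K̄ equals the cyclic group generated by D̄(ξ), then the centralizer in PSL(p,ℂ) of the group K̄ ⋊ ⟨M̄_c⟩ is ⟨D̄(ξ)⟩ × ⟨M̄_c⟩; otherwise the centralizer is ⟨D̄(ξ)⟩. -/

import Mathlib

open Matrix

/-- `PSL(p, ℂ)` as the quotient of `SL(p, ℂ)` by its center. -/
abbrev PSL (p : ℕ) [Fact p.Prime] : Type :=
  Matrix.SpecialLinearGroup (ZMod p) ℂ ⧸ Subgroup.center (Matrix.SpecialLinearGroup (ZMod p) ℂ)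

/-- The natural projection `π : SL(p,ℂ) → PSL(p,ℂ)`. -/
abbrev projPSL (p : ℕ) [Fact p.Prime] :
    Matrix.SpecialLinearGroup (ZMod p) ℂ →* PSL p :=
  QuotientGroup.mk' _

/-- `D̄`, the image in `PSL(p,ℂ)` of the subgroup of diagonal matrices of `SL(p,ℂ)`. -/
noncomputable def DbarSub (p : ℕ) [Fact p.Prime] : Subgroup (PSL p) :=
  Subgroup.map (projPSL p)
    (Subgroup.closure {x : Matrix.SpecialLinearGroup (ZMod p) ℂ |
      (x : Matrix (ZMod p) (ZMod p) ℂ).IsDiag})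

namespace Stmt6

variable {p : ℕ} [Fact p.Prime]

local notation "SL" => Matrix.SpecialLinearGroup (ZMod p) ℂ

lemma cardZMod : Fintype.card (ZMod p) = p := by
  haveI : NeZero p := ⟨(Fact.out : p.Prime).ne_zero⟩
  exact ZMod.card p

/-- membership in the center iff scalar. -/
lemma center_iff {w : SL} :
    w ∈ Subgroup.center SL ↔
      ∃ a : ℂ, a ^ p = 1 ∧ (w : Matrix (ZMod p) (ZMod p) ℂ) = a • 1 := by
  rw [Matrix.SpecialLinearGroup.mem_center_iff]
  constructor
  · rintro ⟨r, hr, hscal⟩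
    refine ⟨r, by rwa [cardZMod] at hr, ?_⟩
    rw [← hscal]
    ext i j
    simp [Matrix.scalar_apply, Matrix.smul_apply, Matrix.diagonal_apply, Matrix.one_apply]
  · rintro ⟨a, hap, hw⟩
    refine ⟨a, by rwa [cardZMod], ?_⟩
    rw [hw]
    ext i j
    simp [Matrix.scalar_apply, Matrix.smul_apply, Matrix.diagonal_apply, Matrix.one_apply]

lemma central_of_scalar (w : SL) (a : ℂ)
    (h : (w : Matrix (ZMod p) (ZMod p) ℂ) = a • 1) : w ∈ Subgroup.center SL := by
  rw [center_iff]
  refine ⟨a, ?_, h⟩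
  have hd := w.prop
  rw [h] at hd
  haveI : NeZero p := ⟨(Fact.out : p.Prime).ne_zero⟩
  simpa [Matrix.det_smul, cardZMod] using hd

lemma proj_eq_of_smul (u v : SL) (a : ℂ)
    (h : (u : Matrix (ZMod p) (ZMod p) ℂ) = a • (v : Matrix (ZMod p) (ZMod p) ℂ)) :
    projPSL p u = projPSL p v := by
  have hvu : v * (v⁻¹ * u) = u := by group
  have hval : (v : Matrix (ZMod p) (ZMod p) ℂ) * ((v⁻¹ * u : SL) : Matrix (ZMod p) (ZMod p) ℂ)
      = (v : Matrix (ZMod p) (ZMod p) ℂ) * (a • 1) := by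
    have h2 : ((v * (v⁻¹ * u) : SL) : Matrix (ZMod p) (ZMod p) ℂ)
        = (v : Matrix (ZMod p) (ZMod p) ℂ) * ((v⁻¹ * u : SL) : Matrix (ZMod p) (ZMod p) ℂ) := rfl
    rw [← h2, hvu, h]
    rw [mul_smul_comm, mul_one]
  have hunit : IsUnit (v : Matrix (ZMod p) (ZMod p) ℂ) := by
    apply Matrix.isUnit_iff_isUnit_det _ |>.mpr
    simp [v.prop]
  have hcen : (v⁻¹ * u : SL) ∈ Subgroup.center SL :=
    central_of_scalar _ a (hunit.mul_left_cancel hval)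
  have : projPSL p (v⁻¹ * u) = 1 := by
    rwa [← QuotientGroup.ker_mk' (Subgroup.center SL), MonoidHom.mem_ker] at hcen
  calc projPSL p u = projPSL p (v * (v⁻¹ * u)) := by rw [hvu]
    _ = projPSL p v * projPSL p (v⁻¹ * u) := map_mul _ _ _
    _ = projPSL p v := by rw [this, mul_one]

lemma comm_scalar_of_proj (u v : SL)
    (h : projPSL p u * projPSL p v = projPSL p v * projPSL p u) :
    ∃ a : ℂ, a ^ p = 1 ∧
      (u : Matrix (ZMod p) (ZMod p) ℂ) * v = a • ((v : Matrix (ZMod p) (ZMod p) ℂ) * u) := by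
  have hmem : ((v * u)⁻¹ * (u * v) : SL) ∈ Subgroup.center SL := by
    rw [← QuotientGroup.ker_mk' (Subgroup.center SL), MonoidHom.mem_ker]
    have : projPSL p (u * v) = projPSL p (v * u) := by
      rw [_root_.map_mul, _root_.map_mul, h]
    rw [_root_.map_mul, map_inv, this, inv_mul_cancel]
  obtain ⟨a, hap, hw⟩ := center_iff.mp hmem
  refine ⟨a, hap, ?_⟩
  have hvu : (v * u) * ((v * u)⁻¹ * (u * v)) = u * v := by group
  have h2 : ((v * u : SL) : Matrix (ZMod p) (ZMod p) ℂ) *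
      (((v * u)⁻¹ * (u * v) : SL) : Matrix (ZMod p) (ZMod p) ℂ)
      = ((u * v : SL) : Matrix (ZMod p) (ZMod p) ℂ) := by
    rw [← Matrix.SpecialLinearGroup.coe_mul, hvu]
  rw [hw] at h2
  have h3 : (u : Matrix (ZMod p) (ZMod p) ℂ) * v = ((u * v : SL) : Matrix (ZMod p) (ZMod p) ℂ) := rfl
  have h4 : ((v * u : SL) : Matrix (ZMod p) (ZMod p) ℂ) = (v : Matrix (ZMod p) (ZMod p) ℂ) * u := rfl
  rw [h3, ← h2, h4, mul_smul_comm, mul_one]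

lemma isDiag_mul_comm {A B : Matrix (ZMod p) (ZMod p) ℂ} (hA : A.IsDiag) (hB : B.IsDiag) :
    A * B = B * A := by
  rw [← hA.diagonal_diag, ← hB.diagonal_diag, Matrix.diagonal_mul_diagonal,
    Matrix.diagonal_mul_diagonal]
  exact congrArg _ (funext fun i => mul_comm _ _)

lemma isDiag_mul {A B : Matrix (ZMod p) (ZMod p) ℂ} (hA : A.IsDiag) (hB : B.IsDiag) :
    (A * B).IsDiag := by
  rw [← hA.diagonal_diag, ← hB.diagonal_diag, Matrix.diagonal_mul_diagonal]
  exact Matrix.isDiag_diagonal _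

def diagSub (p : ℕ) [Fact p.Prime] : Subgroup (Matrix.SpecialLinearGroup (ZMod p) ℂ) :=
  { carrier := {x | (x : Matrix (ZMod p) (ZMod p) ℂ).IsDiag}
    one_mem' := by
      show ((1 : Matrix.SpecialLinearGroup (ZMod p) ℂ) : Matrix (ZMod p) (ZMod p) ℂ).IsDiag
      rw [Matrix.SpecialLinearGroup.coe_one]
      exact Matrix.isDiag_one
    mul_mem' := by
      intro a b ha hb
      exact isDiag_mul ha hb
    inv_mem' := by
      intro a ha
      simp only [Set.mem_setOf_eq] at ha ⊢
      set g := (a : Matrix (ZMod p) (ZMod p) ℂ).diag with hg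
      have hprod : ∏ i, g i = 1 := by
        have := a.prop
        rwa [← ha.diagonal_diag, Matrix.det_diagonal] at this
      have hgne : ∀ i, g i ≠ 0 := by
        intro i hi
        apply one_ne_zero (α := ℂ)
        rw [← hprod]
        exact Finset.prod_eq_zero (Finset.mem_univ i) hi
      have hdetinv : Matrix.det (Matrix.diagonal fun i => (g i)⁻¹) = 1 := by
        rw [Matrix.det_diagonal]
        have : ∏ i : ZMod p, (g i)⁻¹ = (∏ i : ZMod p, g i)⁻¹ := by
          simp
        rw [this, hprod, inv_one]
      set b : Matrix.SpecialLinearGroup (ZMod p) ℂ :=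
        ⟨Matrix.diagonal fun i => (g i)⁻¹, hdetinv⟩ with hb
      have hab : a * b = 1 := by
        apply Subtype.ext
        show (a : Matrix (ZMod p) (ZMod p) ℂ) * (b : Matrix (ZMod p) (ZMod p) ℂ) = 1
        rw [← ha.diagonal_diag]
        show Matrix.diagonal g * Matrix.diagonal (fun i => (g i)⁻¹) = 1
        rw [Matrix.diagonal_mul_diagonal]
        have : (fun i => g i * (g i)⁻¹) = fun _ => (1 : ℂ) := by
          funext i; exact mul_inv_cancel₀ (hgne i)
        rw [this, Matrix.diagonal_one]
      have : a⁻¹ = b := inv_eq_of_mul_eq_one_right hab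
      rw [this]
      exact Matrix.isDiag_diagonal _ }

lemma closure_diag_eq : Subgroup.closure {x : SL | (x : Matrix (ZMod p) (ZMod p) ℂ).IsDiag}
    = diagSub p := Subgroup.closure_eq (diagSub p)

lemma memDbar {k : PSL p} : k ∈ DbarSub p ↔
    ∃ d : SL, ((d : Matrix (ZMod p) (ZMod p) ℂ)).IsDiag ∧ projPSL p d = k := by
  unfold DbarSub
  rw [closure_diag_eq, Subgroup.mem_map]
  constructor
  · rintro ⟨d, hd, rfl⟩; exact ⟨d, hd, rfl⟩
  · rintro ⟨d, hd, rfl⟩; exact ⟨d, hd, rfl⟩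

variable {ξ : ℂ}

omit [Fact (Nat.Prime p)] in
lemma xi_pow_mod (hξ : IsPrimitiveRoot ξ p) (a : ℕ) : ξ ^ a = ξ ^ (a % p) := by
  conv_lhs => rw [← Nat.div_add_mod a p]
  rw [pow_add, pow_mul, hξ.pow_eq_one, one_pow, one_mul]

lemma xi_pow_congr (hξ : IsPrimitiveRoot ξ p) {a b : ℕ} (h : (a : ZMod p) = (b : ZMod p)) :
    ξ ^ a = ξ ^ b := by
  rw [ZMod.natCast_eq_natCast_iff'] at h
  rw [xi_pow_mod hξ a, xi_pow_mod hξ b, h]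

lemma xi_pow_inj (hξ : IsPrimitiveRoot ξ p) {a b : ℕ} (h : ξ ^ a = ξ ^ b) :
    (a : ZMod p) = (b : ZMod p) := by
  have hp : p.Prime := Fact.out
  rw [ZMod.natCast_eq_natCast_iff']
  rw [xi_pow_mod hξ a, xi_pow_mod hξ b] at h
  exact hξ.pow_inj (Nat.mod_lt _ hp.pos) (Nat.mod_lt _ hp.pos) h

lemma xi_pow_val_natCast (hξ : IsPrimitiveRoot ξ p) (a : ℕ) :
    ξ ^ ((a : ZMod p)).val = ξ ^ a := by
  haveI : NeZero p := ⟨(Fact.out : p.Prime).ne_zero⟩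
  apply xi_pow_congr hξ
  simp [ZMod.natCast_val, ZMod.cast_id]

/-- the cyclic permutation matrix -/
def P0 (p : ℕ) [Fact p.Prime] : Matrix (ZMod p) (ZMod p) ℂ :=
  Matrix.of fun i j : ZMod p => if i = j + 1 then (1 : ℂ) else 0

lemma P0_pow (n : ℕ) :
    (P0 p) ^ n = Matrix.of fun i j : ZMod p => if i = j + (n : ZMod p) then (1 : ℂ) else 0 := by
  induction n with
  | zero => ext i j; simp [Matrix.one_apply]
  | succ n ih =>
    rw [pow_succ, ih]
    ext i j
    rw [Matrix.mul_apply]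
    simp only [Matrix.of_apply, P0]
    rw [Finset.sum_congr rfl (fun k _ => by
      rw [show ((if i = k + (n : ZMod p) then (1:ℂ) else 0) * (if k = j + 1 then (1:ℂ) else 0))
        = (if k = j + 1 then (if i = k + (n : ZMod p) then (1:ℂ) else 0) else 0) by
        split <;> simp])]
    rw [Finset.sum_ite_eq' Finset.univ (j + 1)
      (fun k => if i = k + (n : ZMod p) then (1:ℂ) else 0)]
    simp only [Finset.mem_univ, if_true]
    have : j + 1 + (n : ZMod p) = j + ((n + 1 : ℕ) : ZMod p) := by push_cast; ring
    rw [this]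

lemma mulP_apply (A : Matrix (ZMod p) (ZMod p) ℂ) (i j : ZMod p) :
    (A * P0 p) i j = A i (j + 1) := by
  rw [Matrix.mul_apply]
  simp only [P0, Matrix.of_apply]
  rw [Finset.sum_congr rfl (fun k _ => by
    rw [show (A i k * if k = j + 1 then (1:ℂ) else 0)
      = (if k = j + 1 then A i k else 0) by split <;> simp])]
  rw [Finset.sum_ite_eq' Finset.univ (j+1) (fun k => A i k)]
  simp

lemma Pmul_apply (A : Matrix (ZMod p) (ZMod p) ℂ) (i j : ZMod p) :
    (P0 p * A) (i + 1) j = A i j := by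
  rw [Matrix.mul_apply]
  simp only [P0, Matrix.of_apply]
  rw [Finset.sum_congr rfl (fun k _ => by
    rw [show ((if i + 1 = k + 1 then (1:ℂ) else 0) * A k j)
      = (if k = i then A k j else 0) from by
      by_cases h : k = i
      · subst h; simp
      · have h2 : ¬ (i + 1 = k + 1) := fun hh => h (add_right_cancel hh).symm
        rw [if_neg h, if_neg h2, zero_mul]])]
  rw [Finset.sum_ite_eq' Finset.univ i (fun k => A k j)]
  simp

/-- the geometric dichotomy: a diagonal element (projectively) commuting with a nontrivial
shifted rescaling must be a power of `Dm` in the projective group. -/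
lemma geo_mem_zpowers (hξ : IsPrimitiveRoot ξ p)
    (Dm : SL) (cD : ℂ) (hcD0 : cD ≠ 0)
    (hcD : (Dm : Matrix (ZMod p) (ZMod p) ℂ)
      = cD • Matrix.diagonal fun i : ZMod p => ξ ^ i.val)
    (d : SL) (g : ZMod p → ℂ)
    (hdg : (d : Matrix (ZMod p) (ZMod p) ℂ) = Matrix.diagonal g)
    (m : ℕ) (j0 : ZMod p) (hj0 : j0 ≠ 0)
    (hrel : ∀ k : ZMod p, g k = ξ ^ m * g (k + j0)) :
    projPSL p d ∈ Subgroup.zpowers (projPSL p Dm) := by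
  haveI : NeZero p := ⟨(Fact.out : p.Prime).ne_zero⟩
  have hp : p.Prime := Fact.out
  set m' : ℕ := m * (p - 1) with hm'
  have hmm : ξ ^ (m' + m) = 1 := by
    have hps : p - 1 + 1 = p := Nat.succ_pred_eq_of_pos hp.pos
    rw [hm', show m * (p-1) + m = p * m from by
      calc m * (p-1) + m = m * ((p - 1) + 1) := by ring
        _ = p * m := by rw [hps]; ring]
    rw [pow_mul, hξ.pow_eq_one, one_pow]
  have hinv : ∀ k : ZMod p, g (k + j0) = ξ ^ m' * g k := by
    intro k
    have h1 : ξ ^ m' * g k = ξ ^ m' * (ξ ^ m * g (k + j0)) := by rw [← hrel k]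
    rw [← mul_assoc, ← pow_add, hmm, one_mul] at h1
    exact h1.symm
  have hiter : ∀ t : ℕ, g ((t : ZMod p) * j0) = ξ ^ (m' * t) * g 0 := by
    intro t
    induction t with
    | zero => simp
    | succ t ih =>
      have harg : (((t + 1 : ℕ) : ZMod p)) * j0 = ((t : ZMod p) * j0) + j0 := by
        push_cast; ring
      rw [harg, hinv, ih, ← mul_assoc, ← pow_add]
      congr 2
      ring
  have hfield : ∀ i : ZMod p, g i = ξ ^ (m' * (i * j0⁻¹).val) * g 0 := by
    intro i
    have h2 := hiter ((i * j0⁻¹).val)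
    rw [show (((i * j0⁻¹).val : ℕ) : ZMod p) * j0 = i by
      rw [ZMod.natCast_val, ZMod.cast_id, mul_assoc, inv_mul_cancel₀ hj0, mul_one]] at h2
    exact h2
  set s : ZMod p := ((m' : ℕ) : ZMod p) * j0⁻¹ with hs
  set n : ℕ := s.val with hn
  have hxi : ∀ i : ZMod p, ξ ^ (m' * (i * j0⁻¹).val) = ξ ^ (n * i.val) := by
    intro i
    apply xi_pow_congr hξ
    have hcast : ((n : ℕ) : ZMod p) = s := by
      rw [hn, ZMod.natCast_val, ZMod.cast_id]
    push_cast [ZMod.natCast_val, ZMod.cast_id, hcast]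
    rw [hs]
    ring
  have hDmn : ((Dm ^ n : SL) : Matrix (ZMod p) (ZMod p) ℂ)
      = cD ^ n • Matrix.diagonal (fun i : ZMod p => ξ ^ (n * i.val)) := by
    rw [Matrix.SpecialLinearGroup.coe_pow, hcD, smul_pow, Matrix.diagonal_pow]
    have : ((fun i : ZMod p => ξ ^ i.val) ^ n) = fun i : ZMod p => ξ ^ (n * i.val) := by
      funext i
      rw [Pi.pow_apply, ← pow_mul, mul_comm]
    rw [this]
  have hdval : (d : Matrix (ZMod p) (ZMod p) ℂ)
      = (g 0 * (cD ^ n)⁻¹) • ((Dm ^ n : SL) : Matrix (ZMod p) (ZMod p) ℂ) := by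
    rw [hDmn, hdg, smul_smul]
    ext i j
    rw [Matrix.smul_apply]
    by_cases hij : i = j
    · subst hij
      rw [Matrix.diagonal_apply_eq, Matrix.diagonal_apply_eq, hfield i, hxi i]
      have hcDn : (cD : ℂ) ^ n ≠ 0 := pow_ne_zero _ hcD0
      field_simp
      ring
    · rw [Matrix.diagonal_apply_ne _ hij, Matrix.diagonal_apply_ne _ hij, smul_zero]
  have := proj_eq_of_smul d (Dm ^ n) _ hdval
  rw [this, map_pow]
  exact Subgroup.pow_mem _ (Subgroup.mem_zpowers _) n

lemma exists_notin {K : Subgroup (PSL p)} {a : PSL p}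
    (hord : orderOf a = p) (hKnt : K ≠ ⊥) (hne : K ≠ Subgroup.zpowers a) :
    ∃ k ∈ K, k ∉ Subgroup.zpowers a := by
  have hp : p.Prime := Fact.out
  by_contra h
  push_neg at h
  apply hne
  apply le_antisymm h
  obtain ⟨k, hkK, hk1⟩ : ∃ k ∈ K, k ≠ 1 := by
    by_contra h2; push_neg at h2; exact hKnt ((Subgroup.eq_bot_iff_forall K).mpr h2)
  obtain ⟨nz, hnz⟩ := Subgroup.mem_zpowers_iff.mp (h k hkK)
  have hpn : ¬ ((p : ℤ) ∣ nz) := by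
    intro hd
    apply hk1
    rw [← hnz]
    rw [← orderOf_dvd_iff_zpow_eq_one, hord]
    exact hd
  have hprime : Prime (p : ℤ) := Nat.prime_iff_prime_int.mp hp
  have hco : IsCoprime ((p : ℤ)) nz := (Prime.coprime_iff_not_dvd hprime).mpr hpn
  obtain ⟨u, v, huv⟩ := hco
  rw [Subgroup.zpowers_le]
  have key : a = (a ^ (p : ℤ)) ^ u * (a ^ nz) ^ v := by
    rw [← _root_.zpow_mul, ← _root_.zpow_mul, ← _root_.zpow_add]
    rw [show ((p : ℤ) * u + nz * v : ℤ) = 1 from by linarith [huv]]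
    rw [zpow_one]
  rw [key]
  have hap : a ^ (p : ℤ) = 1 := by
    have h5 := pow_orderOf_eq_one a
    rw [hord] at h5
    rw [_root_.zpow_natCast]
    exact h5
  rw [hap, _root_.one_zpow, one_mul, hnz]
  exact Subgroup.zpow_mem K hkK v

end Stmt6

open Stmt6 in
/-- Let `p` be a prime and `K̄` a nontrivial subgroup of `D̄ ≤ PSL(p,ℂ)`
stable by conjugation by `M̄_c`.  Then the centralizer of `K̄ ⋊ ⟨M̄_c⟩` in `PSL(p,ℂ)` is
`⟨D̄(ξ)⟩ × ⟨M̄_c⟩` if `K̄ = ⟨D̄(ξ)⟩` and is `⟨D̄(ξ)⟩` otherwise. -/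
theorem centralizer_K_Mc (p : ℕ) [Fact p.Prime] (ξ : ℂ) (hξ : IsPrimitiveRoot ξ p)
    (Dm Mm : Matrix.SpecialLinearGroup (ZMod p) ℂ)
    (hD : ∃ c : ℂ, (Dm : Matrix (ZMod p) (ZMod p) ℂ) =
      c • Matrix.diagonal fun i : ZMod p => ξ ^ i.val)
    (hM : ∃ c : ℂ, (Mm : Matrix (ZMod p) (ZMod p) ℂ) =
      c • Matrix.of fun i j : ZMod p => if i = j + 1 then (1 : ℂ) else 0)
    (K : Subgroup (PSL p)) (hKD : K ≤ DbarSub p) (hKnt : K ≠ ⊥)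
    (hstab : ∀ x ∈ K, projPSL p Mm * x * (projPSL p Mm)⁻¹ ∈ K) :
    (K = Subgroup.zpowers (projPSL p Dm) →
      Subgroup.centralizer ↑(K ⊔ Subgroup.zpowers (projPSL p Mm)) =
        Subgroup.zpowers (projPSL p Dm) ⊔ Subgroup.zpowers (projPSL p Mm)) ∧
    (K ≠ Subgroup.zpowers (projPSL p Dm) →
      Subgroup.centralizer ↑(K ⊔ Subgroup.zpowers (projPSL p Mm)) =
        Subgroup.zpowers (projPSL p Dm)) := by
  classical
  haveI : NeZero p := ⟨(Fact.out : p.Prime).ne_zero⟩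
  have hp : p.Prime := Fact.out
  obtain ⟨cD, hcD⟩ := hD
  obtain ⟨cM, hcM⟩ := hM
  have hcM' : (Mm : Matrix (ZMod p) (ZMod p) ℂ) = cM • P0 p := hcM
  -- nonvanishing of the scalars
  have hξ0 : ξ ≠ 0 := fun h => by
    have := hξ.pow_eq_one
    rw [h, zero_pow hp.ne_zero] at this
    exact zero_ne_one this
  have hcD0 : cD ≠ 0 := by
    intro h
    have hd := Dm.prop
    rw [hcD, h, zero_smul, Matrix.det_zero] at hd
    exact zero_ne_one hd
  have hcM0 : cM ≠ 0 := by
    intro h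
    have hd := Mm.prop
    rw [hcM', h, zero_smul, Matrix.det_zero] at hd
    exact zero_ne_one hd
  haveI : Fact (1 < p) := ⟨hp.one_lt⟩
  -- ξ-power addition on values
  have hxval : ∀ i j : ZMod p, ξ ^ (i + j).val = ξ ^ i.val * ξ ^ j.val := by
    intro i j
    rw [← pow_add]
    apply xi_pow_congr hξ
    push_cast [ZMod.natCast_val, ZMod.cast_id]
    ring
  -- the fundamental commutation relation between Dm and Mm
  have relDM : (Dm : Matrix (ZMod p) (ZMod p) ℂ) * (Mm : Matrix (ZMod p) (ZMod p) ℂ)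
      = ξ • ((Mm : Matrix (ZMod p) (ZMod p) ℂ) * (Dm : Matrix (ZMod p) (ZMod p) ℂ)) := by
    have hDP : (Matrix.diagonal fun i : ZMod p => ξ ^ i.val) * P0 p
        = ξ • (P0 p * (Matrix.diagonal fun i : ZMod p => ξ ^ i.val)) := by
      ext i j
      rw [Matrix.diagonal_mul, Matrix.smul_apply, Matrix.mul_diagonal]
      simp only [P0, Matrix.of_apply]
      by_cases h : i = j + 1
      · rw [if_pos h, mul_one, h, hxval j 1, smul_eq_mul, ZMod.val_one]
        ring
      · rw [if_neg h, mul_zero, zero_mul, smul_zero]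
    rw [hcD, hcM']
    calc (cD • Matrix.diagonal fun i : ZMod p => ξ ^ i.val) * (cM • P0 p)
        = (cD * cM) • ((Matrix.diagonal fun i : ZMod p => ξ ^ i.val) * P0 p) := by
          rw [smul_mul_assoc, mul_smul_comm, smul_smul]
      _ = (cD * cM) • (ξ • (P0 p * (Matrix.diagonal fun i : ZMod p => ξ ^ i.val))) := by
          rw [hDP]
      _ = ξ • ((cM • P0 p) * (cD • Matrix.diagonal fun i : ZMod p => ξ ^ i.val)) := by
          rw [smul_mul_assoc, mul_smul_comm, smul_smul, smul_smul, smul_smul]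
          congr 1
          ring
  have relDMpow : ∀ e : ℕ, ((Dm : Matrix (ZMod p) (ZMod p) ℂ)) ^ e * (Mm : Matrix (ZMod p) (ZMod p) ℂ)
      = ξ ^ e • ((Mm : Matrix (ZMod p) (ZMod p) ℂ) * ((Dm : Matrix (ZMod p) (ZMod p) ℂ)) ^ e) := by
    intro e
    induction e with
    | zero => simp
    | succ e ih =>
      rw [pow_succ]
      calc ((Dm : Matrix (ZMod p) (ZMod p) ℂ)) ^ e * (Dm : Matrix (ZMod p) (ZMod p) ℂ)
            * (Mm : Matrix (ZMod p) (ZMod p) ℂ)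
          = ((Dm : Matrix (ZMod p) (ZMod p) ℂ)) ^ e
            * ((Dm : Matrix (ZMod p) (ZMod p) ℂ) * (Mm : Matrix (ZMod p) (ZMod p) ℂ)) := by
            rw [mul_assoc]
        _ = ((Dm : Matrix (ZMod p) (ZMod p) ℂ)) ^ e
            * (ξ • ((Mm : Matrix (ZMod p) (ZMod p) ℂ) * (Dm : Matrix (ZMod p) (ZMod p) ℂ))) := by
            rw [relDM]
        _ = ξ • (((Dm : Matrix (ZMod p) (ZMod p) ℂ)) ^ e * (Mm : Matrix (ZMod p) (ZMod p) ℂ)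
            * (Dm : Matrix (ZMod p) (ZMod p) ℂ)) := by
            rw [mul_smul_comm, mul_assoc]
        _ = ξ • ((ξ ^ e • ((Mm : Matrix (ZMod p) (ZMod p) ℂ) * ((Dm : Matrix (ZMod p) (ZMod p) ℂ)) ^ e))
            * (Dm : Matrix (ZMod p) (ZMod p) ℂ)) := by
            rw [ih]
        _ = ξ ^ (e+1) • ((Mm : Matrix (ZMod p) (ZMod p) ℂ) * ((Dm : Matrix (ZMod p) (ZMod p) ℂ)) ^ (e+1)) := by
            rw [smul_mul_assoc, smul_smul, mul_assoc, ← pow_succ, ← pow_succ']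
  have hDmdiag : ((Dm : Matrix (ZMod p) (ZMod p) ℂ)).IsDiag := by
    rw [hcD]
    exact (Matrix.isDiag_diagonal _).smul cD
  have commDdiag : ∀ d : Matrix.SpecialLinearGroup (ZMod p) ℂ,
      ((d : Matrix (ZMod p) (ZMod p) ℂ)).IsDiag →
      projPSL p Dm * projPSL p d = projPSL p d * projPSL p Dm := by
    intro d hd
    rw [← _root_.map_mul, ← _root_.map_mul]
    congr 1
    exact Subtype.ext (isDiag_mul_comm hDmdiag hd)
  have commDM : projPSL p Dm * projPSL p Mm = projPSL p Mm * projPSL p Dm := by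
    rw [← _root_.map_mul, ← _root_.map_mul]
    exact proj_eq_of_smul _ _ ξ relDM
  have projDm_pow_p : (projPSL p Dm) ^ p = 1 := by
    rw [← map_pow]
    have hval : ((Dm ^ p : Matrix.SpecialLinearGroup (ZMod p) ℂ) : Matrix (ZMod p) (ZMod p) ℂ)
        = cD ^ p • ((1 : Matrix.SpecialLinearGroup (ZMod p) ℂ) : Matrix (ZMod p) (ZMod p) ℂ) := by
      rw [Matrix.SpecialLinearGroup.coe_pow, hcD, smul_pow, Matrix.SpecialLinearGroup.coe_one,
        Matrix.diagonal_pow]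
      have : ((fun i : ZMod p => ξ ^ i.val) ^ p) = fun _ : ZMod p => (1:ℂ) := by
        funext i
        rw [Pi.pow_apply, ← pow_mul, mul_comm, pow_mul, hξ.pow_eq_one, one_pow]
      rw [this, Matrix.diagonal_one]
    rw [proj_eq_of_smul (Dm ^ p) 1 _ hval, _root_.map_one]
  have projDm_ne : projPSL p Dm ≠ 1 := by
    intro h1
    have hker : Dm ∈ Subgroup.center (Matrix.SpecialLinearGroup (ZMod p) ℂ) := by
      rw [← QuotientGroup.ker_mk' (Subgroup.center (Matrix.SpecialLinearGroup (ZMod p) ℂ)),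
        MonoidHom.mem_ker]
      exact h1
    obtain ⟨a, _, ha⟩ := center_iff.mp hker
    have e0 : (Dm : Matrix (ZMod p) (ZMod p) ℂ) 0 0 = a := by
      rw [ha, Matrix.smul_apply, Matrix.one_apply_eq, smul_eq_mul, mul_one]
    have e1 : (Dm : Matrix (ZMod p) (ZMod p) ℂ) 1 1 = a := by
      rw [ha, Matrix.smul_apply, Matrix.one_apply_eq, smul_eq_mul, mul_one]
    rw [hcD, Matrix.smul_apply, Matrix.diagonal_apply_eq, smul_eq_mul, ZMod.val_zero,
      pow_zero, mul_one] at e0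
    rw [hcD, Matrix.smul_apply, Matrix.diagonal_apply_eq, smul_eq_mul, ZMod.val_one,
      pow_one] at e1
    have hxi1 : ξ = 1 := by
      have : cD * ξ = cD * 1 := by rw [mul_one, e1, e0]
      exact mul_left_cancel₀ hcD0 this
    have := (hξ.pow_eq_one_iff_dvd 1).mp (by rw [pow_one, hxi1])
    have := Nat.le_of_dvd one_pos this
    have h2lt := hp.one_lt
    omega
  have horder : orderOf (projPSL p Dm) = p := orderOf_eq_prime projDm_pow_p projDm_ne
  -- `π Dm` centralizes everything in sight
  have hDc : projPSL p Dm ∈ Subgroup.centralizer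
      ↑(K ⊔ Subgroup.zpowers (projPSL p Mm)) := by
    rw [Subgroup.mem_centralizer_iff]
    intro g hg
    have hle : K ⊔ Subgroup.zpowers (projPSL p Mm) ≤ Subgroup.centralizer {projPSL p Dm} := by
      refine sup_le ?_ ?_
      · intro k hk
        obtain ⟨d, hd, hdk⟩ := memDbar.mp (hKD hk)
        rw [Subgroup.mem_centralizer_iff]
        intro h hh
        rw [Set.mem_singleton_iff] at hh
        subst hh
        rw [← hdk]
        exact commDdiag d hd
      · rw [Subgroup.zpowers_le, Subgroup.mem_centralizer_iff]
        intro h hh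
        rw [Set.mem_singleton_iff] at hh
        subst hh
        exact commDM
    exact (Subgroup.mem_centralizer_iff.mp (hle hg) (projPSL p Dm) rfl).symm
  have hMcent : K = Subgroup.zpowers (projPSL p Dm) →
      projPSL p Mm ∈ Subgroup.centralizer ↑(K ⊔ Subgroup.zpowers (projPSL p Mm)) := by
    intro hK1
    rw [Subgroup.mem_centralizer_iff]
    intro g hg
    have hle : K ⊔ Subgroup.zpowers (projPSL p Mm) ≤ Subgroup.centralizer {projPSL p Mm} := by
      refine sup_le ?_ ?_
      · rw [hK1, Subgroup.zpowers_le, Subgroup.mem_centralizer_iff]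
        intro h hh
        rw [Set.mem_singleton_iff] at hh
        subst hh
        exact commDM.symm
      · rw [Subgroup.zpowers_le, Subgroup.mem_centralizer_iff]
        intro h hh
        rw [Set.mem_singleton_iff] at hh
        subst hh
        rfl
    exact (Subgroup.mem_centralizer_iff.mp (hle hg) (projPSL p Mm) rfl).symm
  -- the key structural analysis of a centralizing element
  have ycirc : ∀ x : Matrix.SpecialLinearGroup (ZMod p) ℂ,
      projPSL p x ∈ Subgroup.centralizer ↑(K ⊔ Subgroup.zpowers (projPSL p Mm)) →
      ∃ (e : ℕ) (y : Matrix.SpecialLinearGroup (ZMod p) ℂ), y = Dm ^ e * x ∧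
        (∀ i j : ZMod p, (y : Matrix (ZMod p) (ZMod p) ℂ) i j
          = (y : Matrix (ZMod p) (ZMod p) ℂ) (i - j) 0) ∧
        (∀ d : Matrix.SpecialLinearGroup (ZMod p) ℂ,
          ((d : Matrix (ZMod p) (ZMod p) ℂ)).IsDiag → projPSL p d ∈ K →
          ∃ m : ℕ, ∀ i j : ZMod p,
            (y : Matrix (ZMod p) (ZMod p) ℂ) i j * (d : Matrix (ZMod p) (ZMod p) ℂ) j j
            = ξ ^ m * ((d : Matrix (ZMod p) (ZMod p) ℂ) i i
              * (y : Matrix (ZMod p) (ZMod p) ℂ) i j)) := by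
    intro x hx
    have hxM : projPSL p x * projPSL p Mm = projPSL p Mm * projPSL p x :=
      (Subgroup.mem_centralizer_iff.mp hx (projPSL p Mm)
        (SetLike.mem_coe.mpr (Subgroup.mem_sup_right (Subgroup.mem_zpowers _)))).symm
    obtain ⟨ω, hωp, hcomm⟩ := comm_scalar_of_proj x Mm hxM
    obtain ⟨b0, hb0lt, hb0⟩ := hξ.eq_pow_of_pow_eq_one hωp
    have hξe : ξ ^ (b0 * (p-1)) * ω = 1 := by
      rw [← hb0, ← pow_add]
      have hps : p - 1 + 1 = p := Nat.succ_pred_eq_of_pos hp.pos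
      rw [show b0 * (p-1) + b0 = p * b0 from by
        calc b0 * (p-1) + b0 = b0 * ((p-1) + 1) := by ring
          _ = p * b0 := by rw [hps]; ring]
      rw [pow_mul, hξ.pow_eq_one, one_pow]
    set e := b0 * (p - 1) with he
    set y : Matrix.SpecialLinearGroup (ZMod p) ℂ := Dm ^ e * x with hydef
    have hyval : (y : Matrix (ZMod p) (ZMod p) ℂ)
        = ((Dm : Matrix (ZMod p) (ZMod p) ℂ)) ^ e * (x : Matrix (ZMod p) (ZMod p) ℂ) := by
      rw [hydef, Matrix.SpecialLinearGroup.coe_mul, Matrix.SpecialLinearGroup.coe_pow]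
    have hyM : (y : Matrix (ZMod p) (ZMod p) ℂ) * (Mm : Matrix (ZMod p) (ZMod p) ℂ)
        = (Mm : Matrix (ZMod p) (ZMod p) ℂ) * (y : Matrix (ZMod p) (ZMod p) ℂ) := by
      rw [hyval]
      calc ((Dm : Matrix (ZMod p) (ZMod p) ℂ)) ^ e * (x : Matrix (ZMod p) (ZMod p) ℂ)
            * (Mm : Matrix (ZMod p) (ZMod p) ℂ)
          = ((Dm : Matrix (ZMod p) (ZMod p) ℂ)) ^ e
            * ((x : Matrix (ZMod p) (ZMod p) ℂ) * (Mm : Matrix (ZMod p) (ZMod p) ℂ)) := by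
            rw [mul_assoc]
        _ = ((Dm : Matrix (ZMod p) (ZMod p) ℂ)) ^ e
            * (ω • ((Mm : Matrix (ZMod p) (ZMod p) ℂ) * (x : Matrix (ZMod p) (ZMod p) ℂ))) := by
            rw [hcomm]
        _ = ω • (((Dm : Matrix (ZMod p) (ZMod p) ℂ)) ^ e * (Mm : Matrix (ZMod p) (ZMod p) ℂ)
            * (x : Matrix (ZMod p) (ZMod p) ℂ)) := by
            rw [mul_smul_comm, mul_assoc]
        _ = ω • ((ξ ^ e • ((Mm : Matrix (ZMod p) (ZMod p) ℂ)
            * ((Dm : Matrix (ZMod p) (ZMod p) ℂ)) ^ e)) * (x : Matrix (ZMod p) (ZMod p) ℂ)) := by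
            rw [relDMpow e]
        _ = (ξ ^ e * ω) • ((Mm : Matrix (ZMod p) (ZMod p) ℂ)
            * (((Dm : Matrix (ZMod p) (ZMod p) ℂ)) ^ e * (x : Matrix (ZMod p) (ZMod p) ℂ))) := by
            rw [smul_mul_assoc, smul_smul, mul_assoc]
            congr 1
            ring
        _ = (Mm : Matrix (ZMod p) (ZMod p) ℂ)
            * (((Dm : Matrix (ZMod p) (ZMod p) ℂ)) ^ e * (x : Matrix (ZMod p) (ZMod p) ℂ)) := by
            rw [hξe, one_smul]
    have hyP : (y : Matrix (ZMod p) (ZMod p) ℂ) * P0 p = P0 p * (y : Matrix (ZMod p) (ZMod p) ℂ) := by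
      have h6 := hyM
      rw [hcM', mul_smul_comm, smul_mul_assoc] at h6
      exact smul_right_injective _ hcM0 h6
    have hstep : ∀ i j : ZMod p, (y : Matrix (ZMod p) (ZMod p) ℂ) (i+1) (j+1)
        = (y : Matrix (ZMod p) (ZMod p) ℂ) i j := by
      intro i j
      have hL := mulP_apply (y : Matrix (ZMod p) (ZMod p) ℂ) (i+1) j
      have hR := Pmul_apply (y : Matrix (ZMod p) (ZMod p) ℂ) i j
      rw [← hL, hyP, hR]
    have hshift : ∀ (t : ℕ) (i j : ZMod p),
        (y : Matrix (ZMod p) (ZMod p) ℂ) (i + t) (j + t) = (y : Matrix (ZMod p) (ZMod p) ℂ) i j := by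
      intro t
      induction t with
      | zero => intro i j; simp
      | succ t ih =>
        intro i j
        have ha : i + ((t+1 : ℕ) : ZMod p) = (i + t) + 1 := by push_cast; ring
        have hb : j + ((t+1 : ℕ) : ZMod p) = (j + t) + 1 := by push_cast; ring
        rw [ha, hb, hstep, ih]
    have hcircY : ∀ i j : ZMod p, (y : Matrix (ZMod p) (ZMod p) ℂ) i j
        = (y : Matrix (ZMod p) (ZMod p) ℂ) (i - j) 0 := by
      intro i j
      have h7 := hshift j.val (i - j) 0
      rw [zero_add] at h7
      rw [show (i - j) + ((j.val : ℕ) : ZMod p) = i from by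
        rw [ZMod.natCast_val, ZMod.cast_id]; ring] at h7
      rw [show ((j.val : ℕ) : ZMod p) = j from by rw [ZMod.natCast_val, ZMod.cast_id]] at h7
      exact h7
    refine ⟨e, y, rfl, hcircY, ?_⟩
    intro d hd hdK
    have hxd : Commute (projPSL p d) (projPSL p x) :=
      Subgroup.mem_centralizer_iff.mp hx (projPSL p d)
        (SetLike.mem_coe.mpr (Subgroup.mem_sup_left hdK))
    have c2 : Commute (projPSL p d) ((projPSL p Dm) ^ e) :=
      (Commute.symm (commDdiag d hd)).pow_right e
    have ccc : Commute (projPSL p d) ((projPSL p Dm) ^ e * projPSL p x) := c2.mul_right hxd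
    have hyproj : projPSL p y = (projPSL p Dm) ^ e * projPSL p x := by
      rw [hydef, _root_.map_mul, map_pow]
    have hyd : projPSL p y * projPSL p d = projPSL p d * projPSL p y := by
      rw [hyproj]
      exact (ccc.symm).eq
    obtain ⟨ωd, hωdp, heqd⟩ := comm_scalar_of_proj y d hyd
    obtain ⟨m, hmlt, hm⟩ := hξ.eq_pow_of_pow_eq_one hωdp
    refine ⟨m, fun i j => ?_⟩
    have hdd : (d : Matrix (ZMod p) (ZMod p) ℂ)
        = Matrix.diagonal ((d : Matrix (ZMod p) (ZMod p) ℂ).diag) := hd.diagonal_diag.symm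
    have h1 : ((y : Matrix (ZMod p) (ZMod p) ℂ)
        * Matrix.diagonal ((d : Matrix (ZMod p) (ZMod p) ℂ).diag)) i j
        = (ωd • (Matrix.diagonal ((d : Matrix (ZMod p) (ZMod p) ℂ).diag)
          * (y : Matrix (ZMod p) (ZMod p) ℂ))) i j := by
      rw [← hdd, heqd]
    rw [Matrix.mul_diagonal, Matrix.smul_apply, Matrix.diagonal_mul, smul_eq_mul, ← hm] at h1
    exact h1
  constructor
  · -- Case K = ⟨π Dm⟩
    intro hK1
    apply le_antisymm
    · intro xbar hxbar
      obtain ⟨x, rfl⟩ := QuotientGroup.mk'_surjective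
        (Subgroup.center (Matrix.SpecialLinearGroup (ZMod p) ℂ)) xbar
      obtain ⟨e, y, hy, hcircY, hconstr⟩ := ycirc x hxbar
      obtain ⟨m, hm⟩ := hconstr Dm hDmdiag (by rw [hK1]; exact Subgroup.mem_zpowers _)
      have hDentry : ∀ i : ZMod p, (Dm : Matrix (ZMod p) (ZMod p) ℂ) i i = cD * ξ ^ i.val := by
        intro i
        rw [hcD, Matrix.smul_apply, Matrix.diagonal_apply_eq, smul_eq_mul]
      set j1 : ZMod p := -((m : ℕ) : ZMod p) with hj1
      have hsupp : ∀ i j : ZMod p, (y : Matrix (ZMod p) (ZMod p) ℂ) i j ≠ 0 → i = j + j1 := by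
        intro i j hY
        have h2 := hm i j
        rw [hDentry i, hDentry j] at h2
        have h2' : ((y : Matrix (ZMod p) (ZMod p) ℂ) i j * cD) * ξ ^ j.val
            = ((y : Matrix (ZMod p) (ZMod p) ℂ) i j * cD) * (ξ ^ m * ξ ^ i.val) := by
          linear_combination h2
        have h3 : ξ ^ j.val = ξ ^ (m + i.val) := by
          rw [pow_add]
          exact mul_left_cancel₀ (mul_ne_zero hY hcD0) h2'
        have h4 := xi_pow_inj hξ h3
        push_cast [ZMod.natCast_val, ZMod.cast_id] at h4
        rw [hj1, h4]
        ring
      set n1 : ℕ := j1.val with hn1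
      have hcast : ((n1 : ℕ) : ZMod p) = j1 := by rw [hn1, ZMod.natCast_val, ZMod.cast_id]
      have hyform : (y : Matrix (ZMod p) (ZMod p) ℂ)
          = ((y : Matrix (ZMod p) (ZMod p) ℂ) j1 0) • (P0 p) ^ n1 := by
        rw [P0_pow]
        ext i j
        rw [Matrix.smul_apply, Matrix.of_apply, hcast]
        by_cases h : i = j + j1
        · rw [if_pos h, smul_eq_mul, mul_one]
          have hij : i - j = j1 := by rw [h]; ring
          rw [hcircY i j, hij]
        · rw [if_neg h, smul_eq_mul, mul_zero]
          by_contra hY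
          exact h (hsupp i j hY)
      have hMmn : ((Mm ^ n1 : Matrix.SpecialLinearGroup (ZMod p) ℂ) : Matrix (ZMod p) (ZMod p) ℂ)
          = cM ^ n1 • (P0 p) ^ n1 := by
        rw [Matrix.SpecialLinearGroup.coe_pow, hcM', smul_pow]
      have hyMm : (y : Matrix (ZMod p) (ZMod p) ℂ)
          = ((y : Matrix (ZMod p) (ZMod p) ℂ) j1 0 * (cM ^ n1)⁻¹)
            • ((Mm ^ n1 : Matrix.SpecialLinearGroup (ZMod p) ℂ) : Matrix (ZMod p) (ZMod p) ℂ) := by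
        have hne : cM ^ n1 ≠ 0 := pow_ne_zero _ hcM0
        rw [hMmn, smul_smul]
        rw [show (y : Matrix (ZMod p) (ZMod p) ℂ) j1 0 * (cM ^ n1)⁻¹ * cM ^ n1
          = (y : Matrix (ZMod p) (ZMod p) ℂ) j1 0 from by field_simp]
        exact hyform
      have hproj := proj_eq_of_smul y (Mm ^ n1) _ hyMm
      have h4 : projPSL p y = (projPSL p Dm) ^ e * projPSL p x := by
        rw [hy, _root_.map_mul, map_pow]
      have h5 : (projPSL p Dm) ^ e * projPSL p x = (projPSL p Mm) ^ n1 := by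
        rw [← h4, hproj, map_pow]
      have h6 : projPSL p x = ((projPSL p Dm) ^ e)⁻¹ * (projPSL p Mm) ^ n1 := by
        calc projPSL p x = ((projPSL p Dm) ^ e)⁻¹ * ((projPSL p Dm) ^ e * projPSL p x) := by
              group
          _ = ((projPSL p Dm) ^ e)⁻¹ * (projPSL p Mm) ^ n1 := by rw [h5]
      rw [show (QuotientGroup.mk' (Subgroup.center (Matrix.SpecialLinearGroup (ZMod p) ℂ))) x
        = projPSL p x from rfl, h6]
      exact mul_mem
        (inv_mem (Subgroup.mem_sup_left (pow_mem (Subgroup.mem_zpowers _) e)))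
        (Subgroup.mem_sup_right (pow_mem (Subgroup.mem_zpowers _) n1))
    · exact sup_le (Subgroup.zpowers_le.mpr hDc) (Subgroup.zpowers_le.mpr (hMcent hK1))
  · -- Case K ≠ ⟨π Dm⟩
    intro hKne
    apply le_antisymm
    · intro xbar hxbar
      obtain ⟨x, rfl⟩ := QuotientGroup.mk'_surjective
        (Subgroup.center (Matrix.SpecialLinearGroup (ZMod p) ℂ)) xbar
      obtain ⟨e, y, hy, hcircY, hconstr⟩ := ycirc x hxbar
      obtain ⟨kbar, hkK, hknot⟩ := exists_notin horder hKnt hKne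
      obtain ⟨d, hd, hdk⟩ := memDbar.mp (hKD hkK)
      obtain ⟨m, hm⟩ := hconstr d hd (by rw [hdk]; exact hkK)
      set g : ZMod p → ℂ := (d : Matrix (ZMod p) (ZMod p) ℂ).diag with hgdef
      have hdg : (d : Matrix (ZMod p) (ZMod p) ℂ) = Matrix.diagonal g := hd.diagonal_diag.symm
      have hge : ∀ i : ZMod p, g i = (d : Matrix (ZMod p) (ZMod p) ℂ) i i := fun i => rfl
      have hoff : ∀ i j : ZMod p, i ≠ j → (y : Matrix (ZMod p) (ZMod p) ℂ) i j = 0 := by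
        intro i j hij
        by_contra hY
        have hj0 : i - j ≠ 0 := sub_ne_zero.mpr hij
        rw [hcircY i j] at hY
        have hrel : ∀ k : ZMod p, g k = ξ ^ m * g (k + (i - j)) := by
          intro k
          have hYk : (y : Matrix (ZMod p) (ZMod p) ℂ) (k + (i-j)) k ≠ 0 := by
            rw [hcircY]
            rw [show k + (i - j) - k = i - j from by ring]
            exact hY
          have h2 := hm (k + (i-j)) k
          rw [← hge, ← hge] at h2
          have h2' : g k * (y : Matrix (ZMod p) (ZMod p) ℂ) (k + (i-j)) k
              = (ξ ^ m * g (k + (i-j))) * (y : Matrix (ZMod p) (ZMod p) ℂ) (k + (i-j)) k := by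
            linear_combination h2
          exact mul_right_cancel₀ hYk h2'
        exact hknot (by
          rw [← hdk]
          exact geo_mem_zpowers hξ Dm cD hcD0 hcD d g hdg m (i-j) hj0 hrel)
      have hdiagY : ∀ i : ZMod p, (y : Matrix (ZMod p) (ZMod p) ℂ) i i
          = (y : Matrix (ZMod p) (ZMod p) ℂ) 0 0 := by
        intro i
        rw [hcircY i i, sub_self]
      have hyscal : (y : Matrix (ZMod p) (ZMod p) ℂ)
          = ((y : Matrix (ZMod p) (ZMod p) ℂ) 0 0)
            • ((1 : Matrix.SpecialLinearGroup (ZMod p) ℂ) : Matrix (ZMod p) (ZMod p) ℂ) := by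
        rw [Matrix.SpecialLinearGroup.coe_one]
        ext i j
        rw [Matrix.smul_apply, Matrix.one_apply]
        by_cases h : i = j
        · subst h
          rw [if_pos rfl, smul_eq_mul, mul_one, hdiagY]
        · rw [if_neg h, smul_eq_mul, mul_zero, hoff i j h]
      have hproj := proj_eq_of_smul y 1 _ hyscal
      rw [_root_.map_one] at hproj
      have h4 : (projPSL p Dm) ^ e * projPSL p x = 1 := by
        rw [← map_pow, ← _root_.map_mul, ← hy, hproj]
      have h5 : projPSL p x = ((projPSL p Dm) ^ e)⁻¹ := by
        calc projPSL p x = ((projPSL p Dm) ^ e)⁻¹ * ((projPSL p Dm) ^ e * projPSL p x) := by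
              group
          _ = ((projPSL p Dm) ^ e)⁻¹ := by rw [h4, mul_one]
      rw [show (QuotientGroup.mk' (Subgroup.center (Matrix.SpecialLinearGroup (ZMod p) ℂ))) x
        = projPSL p x from rfl, h5]
      exact inv_mem (pow_mem (Subgroup.mem_zpowers _) e)
    · exact Subgroup.zpowers_le.mpr hDc
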